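/- Sign of the upwind flux at a maximum exceeding one: if a ≥ 1, then for every b ∈ ℝ and every s ∈ ℝ, s_⊕·(M↑(a) + M↓(b))_⊕ − s_⊖·(M↑(b) + M↓(a))_⊕ ≥ 0. -/

import Mathlib

/-- The degenerate mobility `M(v) = K ⬝ (v)₊^p ⬝ (1-v)₊^q`. -/
noncomputable def M (Km : ℝ) (p q : ℕ) (v : ℝ) : ℝ :=
  Km * max v 0 ^ p * max (1 - v) 0 ^ q

/-- The point `v* = p/(p+q)` where the maximum of `M` is attained. -/
noncomputable def vstar (p q : ℕ) : ℝ := (p:ℝ) / ((p:ℝ) + (q:ℝ))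

/-- Increasing part of the mobility. -/
noncomputable def Mup (Km : ℝ) (p q : ℕ) (v : ℝ) : ℝ :=
  if v ≤ vstar p q then M Km p q v else M Km p q (vstar p q)

/-- Decreasing part of the mobility. -/
noncomputable def Mdown (Km : ℝ) (p q : ℕ) (v : ℝ) : ℝ :=
  if v ≤ vstar p q then 0 else M Km p q v - M Km p q (vstar p q)

lemma vstar_pos (p q : ℕ) (hp : 1 ≤ p) (hq : 1 ≤ q) : 0 < vstar p q := by
  have hP : (1:ℝ) ≤ (p:ℝ) := by exact_mod_cast hp
  have hQ : (1:ℝ) ≤ (q:ℝ) := by exact_mod_cast hq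
  unfold vstar; positivity

lemma vstar_lt_one (p q : ℕ) (hp : 1 ≤ p) (hq : 1 ≤ q) : vstar p q < 1 := by
  have hP : (1:ℝ) ≤ (p:ℝ) := by exact_mod_cast hp
  have hQ : (1:ℝ) ≤ (q:ℝ) := by exact_mod_cast hq
  unfold vstar
  rw [div_lt_one (by linarith)]
  linarith

/-- Weighted AM-GM: the core inequality `x^p (1-x)^q ≤ v*^p (1-v*)^q` on `[0,1]`. -/
lemma key_amgm (p q : ℕ) (hp : 1 ≤ p) (hq : 1 ≤ q) (x : ℝ) (hx0 : 0 ≤ x) (hx1 : x ≤ 1) :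
    x ^ p * (1 - x) ^ q ≤ vstar p q ^ p * (1 - vstar p q) ^ q := by
  have hP : (1:ℝ) ≤ (p:ℝ) := by exact_mod_cast hp
  have hQ : (1:ℝ) ≤ (q:ℝ) := by exact_mod_cast hq
  set P : ℝ := (p:ℝ) with hPdef
  set Q : ℝ := (q:ℝ) with hQdef
  have hS : 0 < P + Q := by linarith
  have hSne : P + Q ≠ 0 := ne_of_gt hS
  set w₁ : ℝ := P / (P + Q) with hw1def
  set w₂ : ℝ := Q / (P + Q) with hw2def
  have hw1 : 0 < w₁ := by positivity
  have hw2 : 0 < w₂ := by positivity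
  have hsum : w₁ + w₂ = 1 := by rw [hw1def, hw2def, ← add_div, div_self hSne]
  have hx1' : 0 ≤ 1 - x := by linarith
  -- AM-GM with p₁ = x/w₁, p₂ = (1-x)/w₂
  have h1 : (x / w₁) ^ w₁ * ((1 - x) / w₂) ^ w₂ ≤ 1 := by
    have := Real.geom_mean_le_arith_mean2_weighted hw1.le hw2.le
      (div_nonneg hx0 hw1.le) (div_nonneg hx1' hw2.le) hsum
    calc (x / w₁) ^ w₁ * ((1 - x) / w₂) ^ w₂
        ≤ w₁ * (x / w₁) + w₂ * ((1 - x) / w₂) := this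
      _ = x + (1 - x) := by
          rw [mul_comm w₁, mul_comm w₂, div_mul_cancel₀ _ hw1.ne', div_mul_cancel₀ _ hw2.ne']
      _ = 1 := by ring
  have hA : x ^ w₁ * (1 - x) ^ w₂ ≤ w₁ ^ w₁ * w₂ ^ w₂ := by
    have e1 : x ^ w₁ = (x / w₁) ^ w₁ * w₁ ^ w₁ := by
      rw [← Real.mul_rpow (div_nonneg hx0 hw1.le) hw1.le, div_mul_cancel₀ _ hw1.ne']
    have e2 : (1 - x) ^ w₂ = ((1 - x) / w₂) ^ w₂ * w₂ ^ w₂ := by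
      rw [← Real.mul_rpow (div_nonneg hx1' hw2.le) hw2.le, div_mul_cancel₀ _ hw2.ne']
    have hnn : (0:ℝ) ≤ w₁ ^ w₁ * w₂ ^ w₂ := by positivity
    calc x ^ w₁ * (1 - x) ^ w₂
        = ((x / w₁) ^ w₁ * ((1 - x) / w₂) ^ w₂) * (w₁ ^ w₁ * w₂ ^ w₂) := by
          rw [e1, e2]; ring
      _ ≤ 1 * (w₁ ^ w₁ * w₂ ^ w₂) := by
          exact mul_le_mul_of_nonneg_right h1 hnn
      _ = w₁ ^ w₁ * w₂ ^ w₂ := by ring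
  -- raise to power (P+Q)
  have hB : (x ^ w₁ * (1 - x) ^ w₂) ^ (P + Q) ≤ (w₁ ^ w₁ * w₂ ^ w₂) ^ (P + Q) :=
    Real.rpow_le_rpow (by positivity) hA hS.le
  have lhs_eq : (x ^ w₁ * (1 - x) ^ w₂) ^ (P + Q) = x ^ p * (1 - x) ^ q := by
    rw [Real.mul_rpow (by positivity) (by positivity),
      ← Real.rpow_natCast x p, ← Real.rpow_natCast (1 - x) q,
      ← Real.rpow_mul hx0, ← Real.rpow_mul hx1']
    rw [hw1def, hw2def]
    rw [div_mul_cancel₀ _ hSne, div_mul_cancel₀ _ hSne]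
  have rhs_eq : (w₁ ^ w₁ * w₂ ^ w₂) ^ (P + Q) = vstar p q ^ p * (1 - vstar p q) ^ q := by
    have hv : vstar p q = w₁ := rfl
    have hv2 : 1 - vstar p q = w₂ := by
      rw [hv, hw1def, hw2def]; field_simp; ring
    rw [hv2, hv,
      Real.mul_rpow (by positivity) (by positivity),
      ← Real.rpow_natCast w₁ p, ← Real.rpow_natCast w₂ q,
      ← Real.rpow_mul hw1.le, ← Real.rpow_mul hw2.le]
    rw [hw1def, hw2def]
    rw [div_mul_cancel₀ _ hSne, div_mul_cancel₀ _ hSne]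
  rw [lhs_eq, rhs_eq] at hB
  exact hB

lemma M_le_M_vstar (Km : ℝ) (hK : 0 < Km) (p q : ℕ) (hp : 1 ≤ p) (hq : 1 ≤ q) (v : ℝ) :
    M Km p q v ≤ M Km p q (vstar p q) := by
  have hv0 := vstar_pos p q hp hq
  have hv1 := vstar_lt_one p q hp hq
  have hmax1 : max (vstar p q) 0 = vstar p q := max_eq_left hv0.le
  have hmax2 : max (1 - vstar p q) 0 = 1 - vstar p q := max_eq_left (by linarith)
  have hrhs : M Km p q (vstar p q) = Km * (vstar p q ^ p * (1 - vstar p q) ^ q) := by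
    unfold M; rw [hmax1, hmax2]; ring
  have hrhs_nonneg : 0 ≤ M Km p q (vstar p q) := by
    rw [hrhs]
    exact mul_nonneg hK.le (mul_nonneg (pow_nonneg hv0.le _) (pow_nonneg (by linarith) _))
  rcases le_or_gt v 0 with h | h
  · have hz : M Km p q v = 0 := by
      unfold M
      rw [max_eq_right h, zero_pow (by omega), mul_zero, zero_mul]
    rw [hz]; exact hrhs_nonneg
  · rcases le_or_gt 1 v with h1 | h1
    · have hz : M Km p q v = 0 := by
        unfold M
        rw [max_eq_right (by linarith : 1 - v ≤ 0), zero_pow (by omega), mul_zero]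
      rw [hz]; exact hrhs_nonneg
    · have hm1 : max v 0 = v := max_eq_left h.le
      have hm2 : max (1 - v) 0 = 1 - v := max_eq_left (by linarith)
      unfold M
      rw [hm1, hm2, hmax1, hmax2, mul_assoc, mul_assoc]
      exact mul_le_mul_of_nonneg_left (key_amgm p q hp hq v h.le h1.le) hK.le

/-- Sign of the upwind flux at a maximum exceeding one. -/
theorem upwind_flux_nonneg_at_max_exceeding_one (Km : ℝ) (hK : 0 < Km)
    (p q : ℕ) (hp : 1 ≤ p) (hq : 1 ≤ q)
    (a : ℝ) (ha : 1 ≤ a) (b s : ℝ) :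
    max s 0 * max (Mup Km p q a + Mdown Km p q b) 0
      - max (-s) 0 * max (Mup Km p q b + Mdown Km p q a) 0 ≥ 0 := by
  have hv1 := vstar_lt_one p q hp hq
  have hav : ¬ a ≤ vstar p q := by linarith
  have hMa : M Km p q a = 0 := by
    unfold M
    rw [max_eq_right (by linarith : 1 - a ≤ 0), zero_pow (by omega), mul_zero]
  have hMda : Mdown Km p q a = - M Km p q (vstar p q) := by
    unfold Mdown; rw [if_neg hav, hMa]; ring
  have hMupb : Mup Km p q b ≤ M Km p q (vstar p q) := by
    unfold Mup
    split
    · exact M_le_M_vstar Km hK p q hp hq b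
    · exact le_refl _
  have hneg : Mup Km p q b + Mdown Km p q a ≤ 0 := by
    rw [hMda]; linarith
  have h2 : max (Mup Km p q b + Mdown Km p q a) 0 = 0 := max_eq_right hneg
  rw [h2, mul_zero, sub_zero]
  exact mul_nonneg (le_max_right _ _) (le_max_right _ _)
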